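/- Let G be a graph with κ(G) ≥ 5 and let H be a subgraph of G isomorphic to K_{2,3} such that the two 3-valent vertices of H are not adjacent in G. Then G contains an induced path P whose ends are the two 3-valent vertices of H, which meets no 2-valent vertex of H, and such that some P-bridge of G meets at least two of the 2-valent vertices of H. -/

import Mathlib

open SimpleGraph

/-! ### Basic notions: subdivisions, planarity (via Kuratowski), connectivity -/

/-- A realization of a subdivision of `H` inside `G` whose branch vertices are
given by the injective map `b`: for every edge of `H` there is a path of `G`
between the corresponding branch vertices, these paths are internally disjoint
and internally avoid the branch vertices. -/
def SubdivWith {α V : Type*} (H : SimpleGraph α) (G : SimpleGraph V) (b : α → V) : Prop :=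
  Function.Injective b ∧
  ∃ P : ∀ i j : α, H.Adj i j → G.Walk (b i) (b j),
    (∀ i j (h : H.Adj i j), (P i j h).IsPath) ∧
    (∀ i j (h : H.Adj i j), ∀ v ∈ (P i j h).support, v ∈ Set.range b → v = b i ∨ v = b j) ∧
    (∀ i j k l (h : H.Adj i j) (h' : H.Adj k l), s(i, j) ≠ s(k, l) →
      ∀ v, v ∈ (P i j h).support → v ∈ (P k l h').support → v ∈ Set.range b)

/-- `G` contains a subdivision of `H` (as a subgraph). -/
def ContainsSubdiv {α V : Type*} (H : SimpleGraph α) (G : SimpleGraph V) : Prop :=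
  ∃ b : α → V, SubdivWith H G b

/-- `G` contains a `TK₅`, i.e. a subdivision of `K₅`. -/
def ContainsTK5 {V : Type*} (G : SimpleGraph V) : Prop :=
  ContainsSubdiv (⊤ : SimpleGraph (Fin 5)) G

/-- `G` contains a `TK₃,₃`, i.e. a subdivision of `K₃,₃`. -/
def ContainsTK33 {V : Type*} (G : SimpleGraph V) : Prop :=
  ContainsSubdiv (completeBipartiteGraph (Fin 3) (Fin 3)) G

/-- Planarity of a graph, rendered combinatorially through Kuratowski's
characterization: a graph is planar iff it contains no subdivision of `K₅`
and no subdivision of `K₃,₃`. -/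
def IsPlanar {V : Type*} (G : SimpleGraph V) : Prop :=
  ¬ ContainsTK5 G ∧ ¬ ContainsTK33 G

/-- `κ(G[A]) ≥ k` : the subgraph of `G` induced on `A` is `k`-connected:
`A` has more than `k` vertices and removing fewer than `k` vertices of `A`
leaves the induced subgraph connected. -/
def KConnOn {V : Type*} (G : SimpleGraph V) (A : Set V) (k : ℕ) : Prop :=
  k < A.ncard ∧ ∀ s : Set V, s ⊆ A → s.ncard < k → (G.induce (A \ s)).Connected

/-- `κ(G) ≥ k` : `G` is `k`-connected. -/
def KConn {V : Type*} (G : SimpleGraph V) (k : ℕ) : Prop :=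
  KConnOn G Set.univ k

/-- The vertex connectivity `κ(G)`. -/
noncomputable def kappa {V : Type*} (G : SimpleGraph V) : ℕ :=
  sSup {k : ℕ | KConn G k}

/-- A stable (independent) set of vertices. -/
def StableSet {V : Type*} (G : SimpleGraph V) (s : Set V) : Prop :=
  ∀ u ∈ s, ∀ v ∈ s, ¬ G.Adj u v

/-- `a` is an apex vertex of `G` : `G - a` is planar. -/
def IsApexVertex {V : Type*} (G : SimpleGraph V) (a : V) : Prop :=
  IsPlanar (G.induce {a}ᶜ)

/-- `G` is an apex graph. -/
def IsApexGraph {V : Type*} (G : SimpleGraph V) : Prop :=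
  ∃ a, IsApexVertex G a

/-- `P` is an induced path of `G` (as a walk that is a path whose vertex set
spans no further edges of `G`). -/
def IsInducedPathW {V : Type*} (G : SimpleGraph V) {x y : V} (P : G.Walk x y) : Prop :=
  P.IsPath ∧ ∀ u v, u ∈ P.support → v ∈ P.support → G.Adj u v → s(u, v) ∈ P.edges

/-- `B` is (the vertex set of) a nontrivial bridge of `S` in `G`, i.e. a
connected component of `G - S`. -/
def IsBridgeComp {V : Type*} (G : SimpleGraph V) (S : Set V) (B : Set V) : Prop :=
  B.Nonempty ∧ (∀ v ∈ B, v ∉ S) ∧ (G.induce B).Connected ∧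
  ∀ u ∈ B, ∀ v, G.Adj u v → v ∉ S → v ∈ B

/-! ### Blocks, cutvertices, chains of blocks (relative to a vertex set `A`) -/

/-- `B ⊆ V` induces a connected subgraph. -/
def ConnOn {V : Type*} (G : SimpleGraph V) (B : Set V) : Prop :=
  B.Nonempty ∧ (G.induce B).Connected

/-- `B` induces a `2`-connected subgraph in the block sense: connected, and
no single vertex of `B` disconnects it (a single edge counts). -/
def BiconnOn {V : Type*} (G : SimpleGraph V) (B : Set V) : Prop :=
  ConnOn G B ∧ ∀ v ∈ B, (B \ {v}).Nonempty → (G.induce (B \ {v})).Connected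

/-- `B` is (the vertex set of) a block of the subgraph of `G` induced on `A`:
a maximal subset of `A` inducing a `2`-connected subgraph (or an edge). -/
def IsBlockOf {V : Type*} (G : SimpleGraph V) (A B : Set V) : Prop :=
  B ⊆ A ∧ BiconnOn G B ∧ ∀ B', B' ⊆ A → BiconnOn G B' → B ⊆ B' → B = B'

/-- `v` is a cutvertex of the (connected) subgraph of `G` induced on `A`. -/
def IsCutvertexOf {V : Type*} (G : SimpleGraph V) (A : Set V) (v : V) : Prop :=
  v ∈ A ∧ (G.induce A).Connected ∧ ¬ (G.induce (A \ {v})).Connected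

/-- `B` is a leaf block of the subgraph of `G` induced on `A` : a block
containing at most one cutvertex. -/
def IsLeafBlockOf {V : Type*} (G : SimpleGraph V) (A B : Set V) : Prop :=
  IsBlockOf G A B ∧ {v ∈ B | IsCutvertexOf G A v}.Subsingleton

/-- The block `B` of the subgraph of `G` induced on `A` meets `S` internally:
`S` contains a vertex of `B` that is not a cutvertex. -/
def MeetsInternally {V : Type*} (G : SimpleGraph V) (A B S : Set V) : Prop :=
  ∃ v ∈ B ∩ S, ¬ IsCutvertexOf G A v

/-- The subgraph of `G` induced on `A` is a chain of blocks: its block tree is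
a path, i.e. it is connected, every cutvertex lies in exactly two blocks and
every block contains at most two cutvertices. -/
def IsChainOfBlocks {V : Type*} (G : SimpleGraph V) (A : Set V) : Prop :=
  (G.induce A).Connected ∧
  (∀ v, IsCutvertexOf G A v → {B : Set V | IsBlockOf G A B ∧ v ∈ B}.ncard = 2) ∧
  (∀ B, IsBlockOf G A B → {v ∈ B | IsCutvertexOf G A v}.ncard ≤ 2)

/-! ### Hammocks -/

/-- The boundary of a subgraph `H` of `G` : vertices of `H` incident with an
edge of `G` not in `H`. -/
def hammockBoundary {V : Type*} (G : SimpleGraph V) (H : G.Subgraph) : Set V :=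
  {v | v ∈ H.verts ∧ ∃ w, G.Adj v w ∧ s(v, w) ∉ H.edgeSet}

/-- `H` is a `k`-hammock of `G` : a connected subgraph whose boundary has
exactly `k` vertices. -/
def IsHammock {V : Type*} (G : SimpleGraph V) (H : G.Subgraph) (k : ℕ) : Prop :=
  H.Connected ∧ (hammockBoundary G H).ncard = k

/-- The cone over `G` with base `B` : a new vertex joined to every member of `B`. -/
def coneOver {W : Type*} (G : SimpleGraph W) (B : Set W) : SimpleGraph (Option W) where
  Adj a b :=
    Option.elim a (Option.elim b False (fun v => v ∈ B))
      (fun u => Option.elim b (u ∈ B) (fun v => G.Adj u v))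
  symm := by
    constructor
    rintro (_ | u) (_ | v) h
    · simp only [Option.elim] at h
    · exact h
    · exact h
    · exact G.adj_symm h
  loopless := by
    constructor
    rintro (_ | u) h
    · simp only [Option.elim] at h
    · exact G.irrefl h

/-- `G` has an embedding in the closed disc with the vertices of `B` on the
boundary of the disc; combinatorially: the cone over `G` with base `B` is
planar. -/
def DiscEmbeddable {W : Type*} (G : SimpleGraph W) (B : Set W) : Prop :=
  IsPlanar (coneOver G B)

/-- `H` is a planar hammock of `G` : a `5`-hammock with `|V(G)| > |V(H)| ≥ 7`
embeddable in the closed disc with its boundary vertices on the disc boundary. -/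
def IsPlanarHammock {V : Type*} [Fintype V] (G : SimpleGraph V) (H : G.Subgraph) : Prop :=
  IsHammock G H 5 ∧ 7 ≤ H.verts.ncard ∧ H.verts.ncard < Fintype.card V ∧
  DiscEmbeddable H.coe {v : H.verts | (v : V) ∈ hammockBoundary G H}

/-! ### Rooted subdivisions, small subgraphs, circuits -/

/-- `G` contains a `TK₄` rooted at `W` : a subdivision of `K₄` whose branch
vertices are exactly the members of `W`. -/
def ContainsTK4RootedAt {V : Type*} (G : SimpleGraph V) (W : Set V) : Prop :=
  ∃ b : Fin 4 → V, Set.range b = W ∧ SubdivWith (⊤ : SimpleGraph (Fin 4)) G b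

/-- `G` contains `K₂,₃` as a subgraph. -/
def ContainsK23 {V : Type*} (G : SimpleGraph V) : Prop :=
  ∃ x₁ x₂ x₃ x₄ x₅ : V, [x₁, x₂, x₃, x₄, x₅].Pairwise (· ≠ ·) ∧
    G.Adj x₁ x₃ ∧ G.Adj x₁ x₄ ∧ G.Adj x₁ x₅ ∧ G.Adj x₂ x₃ ∧ G.Adj x₂ x₄ ∧ G.Adj x₂ x₅

/-- `G` contains `K₄⁻` (`K₄` minus an edge) as a subgraph. -/
def ContainsK4minus {V : Type*} (G : SimpleGraph V) : Prop :=
  ∃ a b c d : V, [a, b, c, d].Pairwise (· ≠ ·) ∧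
    G.Adj a b ∧ G.Adj a c ∧ G.Adj a d ∧ G.Adj b c ∧ G.Adj b d

/-- `C` is a facial circuit of the (4-connected plane) graph `G`; by Tutte's
theorem these are exactly the induced nonseparating circuits. -/
def IsFacialCircuit {V : Type*} (G : SimpleGraph V) {a : V} (C : G.Walk a a) : Prop :=
  C.IsCycle ∧ (∀ u v, u ∈ C.support → v ∈ C.support → G.Adj u v → s(u, v) ∈ C.edges) ∧
  (G.induce {v | v ∈ C.support}ᶜ).Connected

/-! ### Frames -/

/-- The subgraph `G(X,F)` of a frame `(X,F)` : vertex set `X ∪ V(F)`, edge set `F`. -/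
def frameSubgraph {V : Type*} (G : SimpleGraph V) (X : Set V) (F : Set (Sym2 V)) :
    G.Subgraph where
  verts := X ∪ {v | ∃ e ∈ F, v ∈ e}
  Adj u v := s(u, v) ∈ F ∧ G.Adj u v
  adj_sub h := h.2
  edge_vert := fun {v w} h => Or.inr ⟨s(v, w), h.1, Sym2.mem_mk_left v w⟩
  symm := ⟨fun u v h => ⟨by rw [Sym2.eq_swap]; exact h.1, h.2.symm⟩⟩

/-- `H` is a `U`-hammock : a `2`-hammock of `G` containing at most one element
of `U = UV ∪ UE`. -/
def IsUHammock {V : Type*} (G : SimpleGraph V) (UV : Set V) (UE : Set (Sym2 V))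
    (H : G.Subgraph) : Prop :=
  IsHammock G H 2 ∧ (UV ∩ H.verts).ncard + (UE ∩ H.edgeSet).ncard ≤ 1

/-- Conditions (A.1)–(A.3) of the definition of a `U`-frame, for a collection
`B` of `U`-hammocks. -/
def FrameConds {V : Type*} (G : SimpleGraph V) (UV : Set V) (UE : Set (Sym2 V))
    (X : Set V) (F : Set (Sym2 V)) (B : Set G.Subgraph) : Prop :=
  (∀ H ∈ B, IsUHammock G UV UE H) ∧
  -- `G` is the union of `G(X,F)` and the members of `B`
  (frameSubgraph G X F ⊔ sSup B = ⊤) ∧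
  -- (A.1) each member of `B` has its two ends in distinct components of `G(X,F)`
  (∀ H ∈ B, ∃ (a b : V) (ha : a ∈ (frameSubgraph G X F).verts)
      (hb : b ∈ (frameSubgraph G X F).verts),
      a ≠ b ∧ hammockBoundary G H = {a, b} ∧
      ¬ (frameSubgraph G X F).coe.Reachable ⟨a, ha⟩ ⟨b, hb⟩) ∧
  -- (A.2) exactly three members of `B` meet `U`, and each vertex of `U` is
  -- interior to some member of `B`
  ({H ∈ B | (UV ∩ H.verts).Nonempty ∨ (UE ∩ H.edgeSet).Nonempty}.ncard = 3) ∧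
  (∀ u ∈ UV, ∃ H ∈ B, u ∈ H.verts \ hammockBoundary G H) ∧
  -- (A.3)
  X.ncard ≤ 2 ∧ (X = ∅ → B.ncard = 3)

/-- `(X, F)` is a `U`-frame of `G`. -/
def IsUFrame {V : Type*} (G : SimpleGraph V) (UV : Set V) (UE : Set (Sym2 V))
    (X : Set V) (F : Set (Sym2 V)) : Prop :=
  F ⊆ G.edgeSet ∧ (∀ e ∈ F, ∀ x ∈ X, x ∉ e) ∧
  Nat.card (frameSubgraph G X F).coe.ConnectedComponent = 2 ∧
  ∃ B : Set G.Subgraph, FrameConds G UV UE X F B ∧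
    -- (A.4) maximality of the collection `B`
    ∀ B' : Set G.Subgraph, FrameConds G UV UE X F B' →
      (∀ H ∈ B, ∃ H' ∈ B', H ≤ H') → B = B'

/-! ### Multigraphs -/

/-- The simple graph underlying the multigraph with edge-end map `ends`,
restricted to the edges outside `F`. -/
def Multi.simpleAvoiding {V E : Type*} (ends : E → Sym2 V) (F : Set E) :
    SimpleGraph V where
  Adj u v := u ≠ v ∧ ∃ e, e ∉ F ∧ ends e = s(u, v)
  symm := by
    constructor
    rintro u v ⟨h, e, he, hee⟩
    exact ⟨h.symm, e, he, hee.trans Sym2.eq_swap⟩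
  loopless := ⟨fun v h => h.1 rfl⟩

/-- The simple graph underlying the multigraph with edge-end map `ends`. -/
def Multi.simple {V E : Type*} (ends : E → Sym2 V) : SimpleGraph V :=
  Multi.simpleAvoiding ends ∅

/-- The multigraph with edge-end map `ends` has a circuit containing all
vertices of `AV` and all edges of `AE` : a cyclic sequence of `n ≥ 2` distinct
vertices and `n` distinct edges, consecutive vertices joined by the
corresponding edge. -/
def Multi.HasACircuit {V E : Type*} (ends : E → Sym2 V) (AV : Set V) (AE : Set E) : Prop :=
  ∃ n : ℕ, 2 ≤ n ∧ ∃ (vtx : ZMod n → V) (edg : ZMod n → E),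
    Function.Injective vtx ∧ Function.Injective edg ∧
    (∀ i, ends (edg i) = s(vtx i, vtx (i + 1))) ∧
    (∀ v ∈ AV, ∃ i, vtx i = v) ∧ (∀ e ∈ AE, ∃ i, edg i = e)

/-- `AE` is (the edge set of) a claw `K₁,₃` in the multigraph: three edges
sharing exactly one common endpoint and otherwise pairwise disjoint. -/
def Multi.IsClaw {V E : Type*} (ends : E → Sym2 V) (AE : Set E) : Prop :=
  ∃ (c x y z : V) (e₁ e₂ e₃ : E), [x, y, z].Pairwise (· ≠ ·) ∧
    c ∉ ({x, y, z} : Set V) ∧ AE = {e₁, e₂, e₃} ∧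
    ends e₁ = s(c, x) ∧ ends e₂ = s(c, y) ∧ ends e₃ = s(c, z)

set_option linter.unusedSectionVars false

section St3Lemmas

variable {V : Type} [DecidableEq V] {G : SimpleGraph V}

/-- Reachability in `G` avoiding the vertex set `S`. -/
def ReachA (G : SimpleGraph V) (S : Set V) (u v : V) : Prop :=
  ∃ w : G.Walk u v, ∀ x ∈ w.support, x ∉ S

lemma reachA_refl {S : Set V} {u : V} (hu : u ∉ S) : ReachA G S u u :=
  ⟨Walk.nil, by simpa using hu⟩

lemma reachA_symm {S : Set V} {u v : V} (h : ReachA G S u v) : ReachA G S v u := by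
  obtain ⟨w, hw⟩ := h
  exact ⟨w.reverse, by simpa [Walk.support_reverse] using hw⟩

lemma reachA_trans {S : Set V} {u v x : V} (h : ReachA G S u v) (h' : ReachA G S v x) :
    ReachA G S u x := by
  obtain ⟨w, hw⟩ := h; obtain ⟨w', hw'⟩ := h'
  refine ⟨w.append w', fun y hy => ?_⟩
  rw [Walk.mem_support_append_iff] at hy
  rcases hy with h | h
  exacts [hw y h, hw' y h]

lemma reachA_adj {S : Set V} {u v x : V} (h : ReachA G S u v) (ha : G.Adj v x) (hx : x ∉ S) :
    ReachA G S u x := by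
  obtain ⟨w, hw⟩ := h
  refine ⟨w.concat ha, fun y hy => ?_⟩
  simp only [Walk.support_concat, List.concat_eq_append, List.mem_append,
    List.mem_singleton] at hy
  rcases hy with h | rfl
  exacts [hw y h, hx]

lemma reachA_mem {S : Set V} {u v : V} {w : G.Walk u v} (hw : ∀ x ∈ w.support, x ∉ S) {y : V}
    (hy : y ∈ w.support) : ReachA G S u y :=
  ⟨w.takeUntil y hy, fun x hx => hw x (Walk.support_takeUntil_subset _ hy hx)⟩

lemma reachA_end_not_mem {S : Set V} {u v : V} (h : ReachA G S u v) : v ∉ S := by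
  obtain ⟨w, hw⟩ := h
  exact hw v w.end_mem_support

lemma reachA_start_not_mem {S : Set V} {u v : V} (h : ReachA G S u v) : u ∉ S := by
  obtain ⟨w, hw⟩ := h
  exact hw u w.start_mem_support

/-- The component of `a` in `G - S`. -/
def CompA (G : SimpleGraph V) (S : Set V) (a : V) : Set V := {v | ReachA G S a v}

lemma reachable_induce_of_walk {A : Set V} :
    ∀ {u v : V} (w : G.Walk u v), (∀ x ∈ w.support, x ∈ A) →
      ∀ (hu : u ∈ A) (hv : v ∈ A), (G.induce A).Reachable ⟨u, hu⟩ ⟨v, hv⟩ := by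
  intro u v w
  induction w with
  | nil => intro _ _ _; rfl
  | @cons u m v h p ih =>
    intro hw hu hv
    have hm : m ∈ A := hw m (by simp)
    have hadj : (G.induce A).Adj ⟨u, hu⟩ ⟨m, hm⟩ := by
      simp only [comap_adj, Function.Embedding.coe_subtype]
      exact h
    exact hadj.reachable.trans (ih (fun x hx => hw x (by simp [hx])) hm hv)

lemma walk_of_induce_reachable {A : Set V} {u v : V} (hu : u ∈ A) (hv : v ∈ A)
    (h : (G.induce A).Reachable ⟨u, hu⟩ ⟨v, hv⟩) :
    ∃ w : G.Walk u v, ∀ x ∈ w.support, x ∈ A := by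
  obtain ⟨p⟩ := h
  refine ⟨p.map (SimpleGraph.Embedding.induce A).toHom, fun x hx => ?_⟩
  erw [Walk.support_map, List.mem_map] at hx
  obtain ⟨y, _, rfl⟩ := hx
  exact y.2

lemma edge_mem_of_length_one {u v : V} (w : G.Walk u v) (h : w.length = 1) :
    s(u, v) ∈ w.edges := by
  cases w with
  | nil => simp at h
  | @cons u m v ha w' =>
    rw [Walk.length_cons] at h
    have h0 : w'.length = 0 := by omega
    have := Walk.eq_of_length_eq_zero h0
    subst this
    simp

lemma adj_of_length_one {u v : V} (w : G.Walk u v) (h : w.length = 1) : G.Adj u v :=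
  w.adj_of_mem_edges (edge_mem_of_length_one w h)

lemma support_of_length_zero {u v : V} (w : G.Walk u v) (h : w.length = 0) :
    w.support = [u] := by
  cases w with
  | nil => simp
  | cons ha w' => simp [Walk.length_cons] at h

lemma support_of_length_one {u v : V} (w : G.Walk u v) (h : w.length = 1) :
    w.support = [u, v] := by
  cases w with
  | nil => simp at h
  | @cons u m v ha w' =>
    rw [Walk.length_cons] at h
    have h0 : w'.length = 0 := by omega
    have := Walk.eq_of_length_eq_zero h0
    subst this
    rw [Walk.support_cons, support_of_length_zero w' h0]

lemma chord_shortcut {x y u v : V} (P : G.Walk x y) (hu : u ∈ P.support) (hv : v ∈ P.support)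
    (huv : G.Adj u v) (he : s(u, v) ∉ P.edges) :
    ∃ W : G.Walk x y, W.length < P.length ∧ ∀ z ∈ W.support, z ∈ P.support := by
  have hspec := P.take_spec hv
  have hlenP : (P.takeUntil v hv).length + (P.dropUntil v hv).length = P.length := by
    rw [← Walk.length_append, hspec]
  by_cases hu' : u ∈ (P.takeUntil v hv).support
  · set tkv := P.takeUntil v hv with htkv
    have hspec2 := tkv.take_spec hu'
    have hlen2 : (tkv.takeUntil u hu').length + (tkv.dropUntil u hu').length = tkv.length := by
      rw [← Walk.length_append, hspec2]
    have hmid : 2 ≤ (tkv.dropUntil u hu').length := by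
      rcases Nat.lt_or_ge (tkv.dropUntil u hu').length 2 with hlt | hge
      · interval_cases hml : (tkv.dropUntil u hu').length
        · exact absurd (Walk.eq_of_length_eq_zero hml) huv.ne
        · exact absurd (Walk.edges_takeUntil_subset _ hv
            (Walk.edges_dropUntil_subset _ hu' (edge_mem_of_length_one _ hml))) he
      · exact hge
    refine ⟨(tkv.takeUntil u hu').append (Walk.cons huv (P.dropUntil v hv)), ?_, ?_⟩
    · rw [Walk.length_append, Walk.length_cons]
      omega
    · intro z hz
      rw [Walk.mem_support_append_iff] at hz
      rcases hz with h | h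
      · exact Walk.support_takeUntil_subset _ hv
          (Walk.support_takeUntil_subset _ hu' h)
      · rw [Walk.support_cons, List.mem_cons] at h
        rcases h with rfl | h
        · exact hu
        · exact Walk.support_dropUntil_subset _ hv h
  · have hu2 : u ∈ (P.dropUntil v hv).support := by
      have : u ∈ ((P.takeUntil v hv).append (P.dropUntil v hv)).support := by
        rw [hspec]; exact hu
      rw [Walk.mem_support_append_iff] at this
      tauto
    set dpv := P.dropUntil v hv with hdpv
    have hspec2 := dpv.take_spec hu2
    have hlen2 : (dpv.takeUntil u hu2).length + (dpv.dropUntil u hu2).length = dpv.length := by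
      rw [← Walk.length_append, hspec2]
    have hmid : 2 ≤ (dpv.takeUntil u hu2).length := by
      rcases Nat.lt_or_ge (dpv.takeUntil u hu2).length 2 with hlt | hge
      · interval_cases hml : (dpv.takeUntil u hu2).length
        · exact absurd (Walk.eq_of_length_eq_zero hml).symm huv.ne
        · refine absurd (Walk.edges_dropUntil_subset _ hv
            (Walk.edges_takeUntil_subset _ hu2 ?_)) he
          rw [Sym2.eq_swap]
          exact edge_mem_of_length_one _ hml
      · exact hge
    refine ⟨(P.takeUntil v hv).append (Walk.cons huv.symm (dpv.dropUntil u hu2)), ?_, ?_⟩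
    · rw [Walk.length_append, Walk.length_cons]
      omega
    · intro z hz
      rw [Walk.mem_support_append_iff] at hz
      rcases hz with h | h
      · exact Walk.support_takeUntil_subset _ hv h
      · rw [Walk.support_cons, List.mem_cons] at h
        rcases h with rfl | h
        · exact hv
        · exact Walk.support_dropUntil_subset _ hv
            (Walk.support_dropUntil_subset _ hu2 h)

lemma exists_min_path {S : Set V} {x y : V} (h : ReachA G S x y) :
    ∃ P : G.Walk x y, P.IsPath ∧ (∀ z ∈ P.support, z ∉ S) ∧
      ∀ W : G.Walk x y, (∀ z ∈ W.support, z ∉ S) → P.length ≤ W.length := by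
  classical
  obtain ⟨w0, hw0⟩ := h
  have hQ : ∃ n, ∃ W : G.Walk x y, W.IsPath ∧ (∀ z ∈ W.support, z ∉ S) ∧ W.length = n :=
    ⟨w0.bypass.length, w0.bypass, w0.bypass_isPath,
      fun z hz => hw0 z (w0.support_bypass_subset hz), rfl⟩
  obtain ⟨P, hP, hPS, hlen⟩ := Nat.find_spec hQ
  refine ⟨P, hP, hPS, fun W hW => ?_⟩
  rw [hlen]
  calc Nat.find hQ ≤ W.bypass.length := Nat.find_min' hQ
        ⟨W.bypass, W.bypass_isPath, fun z hz => hW z (W.support_bypass_subset hz), rfl⟩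
    _ ≤ W.length := W.length_bypass_le

lemma exists_induced_path {S : Set V} {x y : V} (h : ReachA G S x y) :
    ∃ P : G.Walk x y, P.IsPath ∧ (∀ z ∈ P.support, z ∉ S) ∧
      (∀ u v, u ∈ P.support → v ∈ P.support → G.Adj u v → s(u, v) ∈ P.edges) ∧
      ∀ W : G.Walk x y, (∀ z ∈ W.support, z ∉ S) → P.length ≤ W.length := by
  obtain ⟨P, hP, hPS, hmin⟩ := exists_min_path h
  refine ⟨P, hP, hPS, fun u v hu hv huv => ?_, hmin⟩
  by_contra he
  obtain ⟨W, hWl, hWs⟩ := chord_shortcut P hu hv huv he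
  have := hmin W (fun z hz => hPS z (hWs z hz))
  omega

lemma append_isPath {u v w : V} (p : G.Walk u v) (q : G.Walk v w) (hq : q.IsPath) :
    p.IsPath → (∀ x ∈ p.support, x ∈ q.support → x = v) → (p.append q).IsPath := by
  induction p with
  | nil => intro _ _; simpa using hq
  | @cons a b v' ha p' ih =>
    intro hp h
    rw [Walk.cons_append, Walk.cons_isPath_iff]
    rw [Walk.cons_isPath_iff] at hp
    refine ⟨ih q hq hp.1 (fun x hx hxq => h x (by simp [hx]) hxq), ?_⟩
    rw [Walk.mem_support_append_iff]
    rintro (h1 | h2)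
    · exact hp.2 h1
    · have hav : a = v' := h a (by simp) h2
      exact hp.2 (hav ▸ p'.end_mem_support)

lemma concat_isPath {u w v : V} {P : G.Walk u w} (h : P.IsPath) (hv : v ∉ P.support)
    (hwv : G.Adj w v) : (P.concat hwv).IsPath := by
  refine append_isPath _ _ ?_ h ?_
  · rw [Walk.cons_isPath_iff]
    exact ⟨Walk.IsPath.nil, by simpa using hwv.ne⟩
  · intro x hx hxq
    rw [Walk.support_cons, Walk.support_nil] at hxq
    rcases List.mem_cons.mp hxq with rfl | hxq
    · rfl
    · rw [List.mem_singleton] at hxq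
      subst hxq
      exact absurd hx hv

lemma first_touch {a b : V} (w : G.Walk a b) (T : Set V) (hb : b ∈ T) :
    ∃ (z : V) (w₁ : G.Walk a z) (w₂ : G.Walk z b), w₁.append w₂ = w ∧ z ∈ T ∧
      ∀ x ∈ w₁.support, x ∈ T → x = z := by
  induction w with
  | nil => exact ⟨_, Walk.nil, Walk.nil, rfl, hb, fun x hx _ => by simpa using hx⟩
  | @cons a m b ha p ih =>
    by_cases hT : a ∈ T
    · exact ⟨a, Walk.nil, Walk.cons ha p, rfl, hT, by simp⟩
    · obtain ⟨z, w₁, w₂, heq, hz, hw⟩ := ih hb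
      refine ⟨z, Walk.cons ha w₁, w₂, by rw [Walk.cons_append, heq], hz, ?_⟩
      intro x hx hxT
      rw [Walk.support_cons, List.mem_cons] at hx
      rcases hx with rfl | hx
      · exact absurd hxT hT
      · exact hw x hx hxT

lemma exit_edge {T : Set V} : ∀ {a b : V} (w : G.Walk a b), a ∈ T → b ∉ T →
    ∃ c d, c ∈ T ∧ d ∉ T ∧ G.Adj c d ∧ d ∈ w.support := by
  intro a b w
  induction w with
  | nil => intro ha hb; exact absurd ha hb
  | @cons a m b ha p ih =>
    intro haT hbT
    by_cases hm : m ∈ T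
    · obtain ⟨c, d, h1, h2, h3, h4⟩ := ih hm hbT
      exact ⟨c, d, h1, h2, h3, by simp [h4]⟩
    · exact ⟨a, m, haT, hm, ha, by simp⟩

lemma end_not_mem_takeUntil {x y c : V} {p : G.Walk x y} (hp : p.IsPath) (hc : c ∈ p.support)
    (hne : c ≠ y) : y ∉ (p.takeUntil c hc).support := by
  intro hy
  have hnd : ((p.takeUntil c hc).support ++ (p.dropUntil c hc).support.tail).Nodup := by
    rw [← Walk.support_append, p.take_spec hc]
    exact hp.support_nodup
  have hdisj := List.disjoint_of_nodup_append hnd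
  have hyd : y ∈ (p.dropUntil c hc).support.tail := by
    have hm : y ∈ (p.dropUntil c hc).support := Walk.end_mem_support _
    rw [Walk.support_eq_cons (p.dropUntil c hc)] at hm
    rcases List.mem_cons.mp hm with h | hm
    · exact absurd h.symm hne
    · exact hm
  exact hdisj hy hyd

lemma step_main {u w v z : V} {X : Set V}
    (hvu : v ≠ u) (hvX : v ∉ X)
    (P₁ P₂ : G.Walk u w) (h₁ : P₁.IsPath) (h₂ : P₂.IsPath)
    (hA₁ : ∀ x ∈ P₁.support, x ∉ X) (hA₂ : ∀ x ∈ P₂.support, x ∉ X)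
    (hd : ∀ x, x ∈ P₁.support → x ∈ P₂.support → x = u ∨ x = w)
    (hwv : G.Adj w v) (hv₂ : v ∉ P₂.support)
    (W₁ : G.Walk v z) (hW₁p : W₁.IsPath) (hW₁X : ∀ x ∈ W₁.support, x ∉ X)
    (hW₁w : w ∉ W₁.support)
    (hz : z ∈ P₁.support)
    (hW₁T : ∀ x ∈ W₁.support, (x ∈ P₁.support ∨ x ∈ P₂.support) → x = z) :
    ∃ p q : G.Walk u v, p.IsPath ∧ q.IsPath ∧ (∀ x ∈ p.support, x ∉ X) ∧
      (∀ x ∈ q.support, x ∉ X) ∧ ∀ x, x ∈ p.support → x ∈ q.support → x = u ∨ x = v := by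
  have hzw : z ≠ w := fun h => hW₁w (h ▸ W₁.end_mem_support)
  have hwtk : w ∉ (P₁.takeUntil z hz).support := end_not_mem_takeUntil h₁ hz hzw
  refine ⟨(P₁.takeUntil z hz).append W₁.reverse, P₂.concat hwv, ?_, ?_, ?_, ?_, ?_⟩
  · refine append_isPath _ _ hW₁p.reverse (h₁.takeUntil hz) ?_
    intro x hx hxr
    rw [Walk.support_reverse, List.mem_reverse] at hxr
    exact hW₁T x hxr (Or.inl (Walk.support_takeUntil_subset _ hz hx))
  · exact concat_isPath h₂ hv₂ hwv
  · intro x hx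
    rw [Walk.mem_support_append_iff] at hx
    rcases hx with hx | hx
    · exact hA₁ x (Walk.support_takeUntil_subset _ hz hx)
    · rw [Walk.support_reverse, List.mem_reverse] at hx
      exact hW₁X x hx
  · intro x hx
    rw [Walk.support_concat] at hx
    simp only [List.concat_eq_append, List.mem_append, List.mem_singleton] at hx
    rcases hx with hx | rfl
    · exact hA₂ x hx
    · exact hvX
  · intro x hxp hxq
    rw [Walk.support_concat] at hxq
    rw [Walk.mem_support_append_iff] at hxp
    simp only [List.concat_eq_append, List.mem_append, List.mem_singleton] at hxq
    rcases hxq with hxq | rfl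
    · rcases hxp with hx | hx
      · rcases hd x (Walk.support_takeUntil_subset _ hz hx) hxq with h | h
        · exact Or.inl h
        · exact absurd (h ▸ hx) hwtk
      · rw [Walk.support_reverse, List.mem_reverse] at hx
        have hxz := hW₁T x hx (Or.inr hxq)
        subst hxz
        rcases hd x hz hxq with h | h
        · exact Or.inl h
        · exact absurd h hzw
    · exact Or.inr rfl

lemma whitney (hR : ∀ S : Set V, S.ncard ≤ 4 → ∀ u v : V, u ∉ S → v ∉ S → ReachA G S u v)
    {X : Set V} (hX : X.ncard ≤ 3) :
    ∀ n : ℕ, ∀ u v : V, u ∉ X → v ∉ X → u ≠ v →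
    (∃ w : G.Walk u v, (∀ x ∈ w.support, x ∉ X) ∧ w.length ≤ n) →
    ∃ p q : G.Walk u v, p.IsPath ∧ q.IsPath ∧ (∀ x ∈ p.support, x ∉ X) ∧
      (∀ x ∈ q.support, x ∉ X) ∧ ∀ x, x ∈ p.support → x ∈ q.support → x = u ∨ x = v := by
  intro n
  induction n using Nat.strong_induction_on with
  | _ n ihn =>
  rintro u v huX hvX huv ⟨w0, hw0, hw0n⟩
  obtain ⟨P, hPp, hPX, hmin⟩ := exists_min_path (G := G) (S := X) ⟨w0, hw0⟩
  have hPn : P.length ≤ n := le_trans (hmin w0 hw0) hw0n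
  have hL1 : 1 ≤ P.length := by
    rcases Nat.eq_zero_or_pos P.length with h0 | h
    · exact absurd (Walk.eq_of_length_eq_zero h0) huv
    · exact h
  by_cases hL : P.length = 1
  · refine ⟨P, P, hPp, hPp, hPX, hPX, ?_⟩
    intro x hx _
    rw [support_of_length_one P hL] at hx
    rcases List.mem_cons.mp hx with rfl | hx
    · exact Or.inl rfl
    · exact Or.inr (List.mem_singleton.mp hx)
  · -- P.length ≥ 2
    have hL2 : 2 ≤ P.length := by omega
    obtain ⟨w, hvw, R, hPr⟩ := Walk.exists_eq_cons_of_ne (Ne.symm huv) P.reverse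
    have hPrp : P.reverse.IsPath := hPp.reverse
    rw [hPr, Walk.cons_isPath_iff] at hPrp
    obtain ⟨hRp, hvR⟩ := hPrp
    have hRX : ∀ x ∈ R.support, x ∉ X := by
      intro x hx
      refine hPX x ?_
      have : x ∈ P.reverse.support := by rw [hPr, Walk.support_cons]; exact List.mem_cons_of_mem _ hx
      rwa [Walk.support_reverse, List.mem_reverse] at this
    have hwX : w ∉ X := hRX w R.start_mem_support
    have hRlen : R.length + 1 = P.length := by
      have := Walk.length_reverse P
      rw [hPr, Walk.length_cons] at this
      omega
    have huw : u ≠ w := by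
      rintro rfl
      have hnil : R = Walk.nil := Walk.isPath_iff_eq_nil.mp hRp
      rw [hnil] at hRlen
      simp only [Walk.length_nil] at hRlen
      omega
    have hvu : v ≠ u := Ne.symm huv
    have hvw' : v ≠ w := hvw.ne
    obtain ⟨P₁, P₂, h₁, h₂, hA₁, hA₂, hd⟩ :=
      ihn (n - 1) (by omega) u w huX hwX huw
        ⟨R.reverse, by
          intro x hx
          rw [Walk.support_reverse, List.mem_reverse] at hx
          exact hRX x hx, by rw [Walk.length_reverse]; omega⟩
    by_cases hv₁ : v ∈ P₁.support
    · have hv₂ : v ∉ P₂.support := fun h2 => by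
        rcases hd v hv₁ h2 with h | h
        exacts [hvu h, hvw' h]
      exact step_main hvu hvX P₁ P₂ h₁ h₂ hA₁ hA₂ hd hvw.symm hv₂ Walk.nil Walk.IsPath.nil
        (by simpa using hvX) (by simpa using (Ne.symm hvw')) hv₁ (fun x hx _ => by simpa using hx)
    · by_cases hv₂ : v ∈ P₂.support
      · exact step_main hvu hvX P₂ P₁ h₂ h₁ hA₂ hA₁
          (fun x h2 h1 => hd x h1 h2) hvw.symm hv₁ Walk.nil Walk.IsPath.nil
          (by simpa using hvX) (by simpa using (Ne.symm hvw')) hv₂ (fun x hx _ => by simpa using hx)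
      · -- main case : fetch a path avoiding X ∪ {w}
        have hcard : (insert w X).ncard ≤ 4 :=
          le_trans (Set.ncard_insert_le _ _) (by omega)
        obtain ⟨Q0, hQ0⟩ := hR (insert w X) hcard u v
          (by simp [huX, huw]) (by simp [hvX, hvw'])
        have hQb : ∀ x ∈ Q0.bypass.support, x ∉ insert w X :=
          fun x hx => hQ0 x (Q0.support_bypass_subset hx)
        obtain ⟨z, W₁, W₂, heq, hzT, hfirst⟩ := first_touch Q0.bypass.reverse
          {x | x ∈ P₁.support ∨ x ∈ P₂.support} (Or.inl P₁.start_mem_support)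
        have hW₁sub : ∀ x ∈ W₁.support, x ∈ Q0.bypass.reverse.support := by
          intro x hx
          rw [← heq, Walk.mem_support_append_iff]
          exact Or.inl hx
        have hW₁ins : ∀ x ∈ W₁.support, x ∉ insert w X := by
          intro x hx
          have := hW₁sub x hx
          rw [Walk.support_reverse, List.mem_reverse] at this
          exact hQb x this
        have hW₁p : W₁.IsPath := by
          have : (W₁.append W₂).IsPath := by rw [heq]; exact Q0.bypass_isPath.reverse
          exact this.of_append_left
        have hW₁X : ∀ x ∈ W₁.support, x ∉ X := fun x hx => fun hxX =>
          hW₁ins x hx (Set.mem_insert_of_mem _ hxX)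
        have hW₁w : w ∉ W₁.support := fun h => hW₁ins w h (Set.mem_insert _ _)
        rcases hzT with hz | hz
        · exact step_main hvu hvX P₁ P₂ h₁ h₂ hA₁ hA₂ hd hvw.symm hv₂ W₁ hW₁p hW₁X hW₁w hz
            (fun x hx ht => hfirst x hx ht)
        · exact step_main hvu hvX P₂ P₁ h₂ h₁ hA₂ hA₁
            (fun x h2 h1 => hd x h1 h2) hvw.symm hv₁ W₁ hW₁p hW₁X hW₁w hz
            (fun x hx ht => hfirst x hx (Or.symm ht))

lemma reach_of_kconn (h5 : KConn G 5) {S : Set V} (hS : S.ncard ≤ 4) {u v : V}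
    (hu : u ∉ S) (hv : v ∉ S) : ReachA G S u v := by
  have hc := h5.2 S (Set.subset_univ S) (lt_of_le_of_lt hS (by norm_num))
  have hu' : u ∈ Set.univ \ S := ⟨trivial, hu⟩
  have hv' : v ∈ Set.univ \ S := ⟨trivial, hv⟩
  obtain ⟨w, hw⟩ := walk_of_induce_reachable hu' hv' (hc.preconnected _ _)
  exact ⟨w, fun x hx => (hw x hx).2⟩

lemma compA_isBridge (S : Set V) (a : V) (ha : a ∉ S) :
    IsBridgeComp G S (CompA G S a) := by
  refine ⟨⟨a, reachA_refl ha⟩, fun v hv => reachA_end_not_mem hv, ?_,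
    fun u hu v hadj hvS => reachA_adj hu hadj hvS⟩
  haveI : Nonempty (CompA G S a) := ⟨⟨a, reachA_refl ha⟩⟩
  constructor
  rintro ⟨b, hb⟩ ⟨c, hc⟩
  obtain ⟨wb, hwb⟩ := hb
  obtain ⟨wc, hwc⟩ := hc
  have hsup : ∀ x ∈ (wb.reverse.append wc).support, x ∈ CompA G S a := by
    intro x hx
    rw [Walk.mem_support_append_iff] at hx
    rcases hx with hx | hx
    · rw [Walk.support_reverse, List.mem_reverse] at hx
      exact reachA_mem hwb hx
    · exact reachA_mem hwc hx
  exact reachable_induce_of_walk (wb.reverse.append wc) hsup _ _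

lemma two_le_ncard_of_pair {Y : Set V} {a b : V} [Finite V] (hab : a ≠ b)
    (ha : a ∈ Y) (hb : b ∈ Y) : 2 ≤ Y.ncard := by
  have h := Set.ncard_le_ncard (Set.insert_subset ha (Set.singleton_subset_iff.2 hb)) Y.toFinite
  rwa [Set.ncard_pair hab] at h

lemma mid_reach {y x₂ t : V} {Q' : G.Walk y x₂} (hQ' : Q'.IsPath) (ht : t ∈ Q'.support)
    (htx2 : t ≠ x₂) :
    ∃ w : G.Walk y t, ∀ x ∈ w.support, x ∈ Q'.support ∧ x ≠ x₂ := by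
  refine ⟨Q'.takeUntil t ht, fun x hx => ⟨Walk.support_takeUntil_subset _ ht hx, ?_⟩⟩
  rintro rfl
  exact end_not_mem_takeUntil hQ' ht htx2 hx

lemma cross_reach {x₁ x₂ y a b : V} {P Q : G.Walk x₁ x₂}
    (hR : ∀ S : Set V, S.ncard ≤ 4 → ∀ u v : V, u ∉ S → v ∉ S → ReachA G S u v)
    (hyreach : ∀ v, v ∈ Q.support → v ≠ x₁ → v ≠ x₂ → ReachA G {z | z ∈ P.support} y v)
    (hPint : ∀ s t, s ∈ P.support → s ≠ x₁ → s ≠ x₂ → t ∈ P.support → t ≠ x₁ → t ≠ x₂ →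
      ReachA G {z | z ∈ Q.support} s t)
    (hdisj : ∀ x, x ∈ P.support → x ∈ Q.support → x = x₁ ∨ x = x₂)
    (haP : a ∉ P.support) (hbP : b ∉ P.support)
    (ha1 : a ≠ x₁) (ha2 : a ≠ x₂) (hb1 : b ≠ x₁) (hb2 : b ≠ x₂)
    (hnab : ¬ ReachA G {z | z ∈ P.support} a b)
    (hna : ¬ ReachA G {z | z ∈ P.support} a y)
    (hnb : ¬ ReachA G {z | z ∈ P.support} b y) :
    ReachA G {z | z ∈ Q.support} a b := by
  set SP : Set V := {z | z ∈ P.support} with hSP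
  set SQ : Set V := {z | z ∈ Q.support} with hSQ
  -- components of a and b avoid Q entirely
  have hcompQ : ∀ c : V, ¬ ReachA G SP c y → ∀ v, ReachA G SP c v → v ∉ Q.support := by
    intro c hcy v hv hvQ
    have hvP : v ∉ SP := reachA_end_not_mem hv
    have hv1 : v ≠ x₁ := fun h => hvP (by subst h; exact P.start_mem_support)
    have hv2 : v ≠ x₂ := fun h => hvP (by subst h; exact P.end_mem_support)
    exact hcy (reachA_trans hv (reachA_symm (hyreach v hvQ hv1 hv2)))
  -- find the attachment of the component of a in the interior of P
  have hexit : ∀ c c' : V, c ∉ SP → c ≠ x₁ → c ≠ x₂ → ¬ ReachA G SP c c' →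
      c' ∉ ({x₁, x₂} : Set V) →
      ∃ e d : V, ReachA G SP c e ∧ G.Adj e d ∧ d ∈ P.support ∧ d ≠ x₁ ∧ d ≠ x₂ := by
    intro c c' hcP hc1 hc2 hncb hbmem
    have hc12 : c ∉ ({x₁, x₂} : Set V) := by simp [hc1, hc2]
    have hcard : ({x₁, x₂} : Set V).ncard ≤ 4 :=
      le_trans (Set.ncard_insert_le _ _) (by simp)
    obtain ⟨w, hw⟩ := hR {x₁, x₂} hcard c c' hc12 hbmem
    have hcC : c ∈ CompA G SP c := reachA_refl hcP
    have hbC : c' ∉ CompA G SP c := hncb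
    obtain ⟨e, d, heC, hdC, hed, hdw⟩ := exit_edge w hcC hbC
    have hd12 : d ∉ ({x₁, x₂} : Set V) := hw d hdw
    have hdP : d ∈ P.support := by
      by_contra hdP
      exact hdC (reachA_adj heC hed hdP)
    refine ⟨e, d, heC, hed, hdP, ?_, ?_⟩
    · intro h; exact hd12 (by simp [h])
    · intro h; exact hd12 (by simp [h])
  obtain ⟨ea, da, hea, heda, hdaP, hda1, hda2⟩ :=
    hexit a b haP ha1 ha2 hnab (by simp [hb1, hb2])
  obtain ⟨eb, db, heb, hedb, hdbP, hdb1, hdb2⟩ :=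
    hexit b a hbP hb1 hb2 (fun h => hnab (reachA_symm h)) (by simp [ha1, ha2])
  -- transfers: SP-avoiding walks from a (resp. b) also avoid Q
  have htrans : ∀ c : V, ¬ ReachA G SP c y → ∀ v, ReachA G SP c v → ReachA G SQ c v := by
    intro c hcy v hv
    obtain ⟨w, hw⟩ := hv
    refine ⟨w, fun x hx => ?_⟩
    exact hcompQ c hcy x (reachA_mem hw hx)
  have hdaQ : da ∉ SQ := by
    intro h
    rcases hdisj da hdaP h with h1 | h2
    exacts [hda1 h1, hda2 h2]
  have hdbQ : db ∉ SQ := by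
    intro h
    rcases hdisj db hdbP h with h1 | h2
    exacts [hdb1 h1, hdb2 h2]
  have h1 : ReachA G SQ a da := reachA_adj (htrans a hna ea hea) heda hdaQ
  have h2 : ReachA G SQ b db := reachA_adj (htrans b hnb eb heb) hedb hdbQ
  exact reachA_trans h1 (reachA_trans (hPint da db hdaP hda1 hda2 hdbP hdb1 hdb2)
    (reachA_symm h2))

lemma result_of_pair [Finite V] {x₁ x₂ x₃ x₄ x₅ : V} (R : G.Walk x₁ x₂)
    (h3 : x₃ ∉ R.support) (h4 : x₄ ∉ R.support) (h5 : x₅ ∉ R.support)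
    {a b : V} (ha : a ∈ ({x₃, x₄, x₅} : Set V)) (hb : b ∈ ({x₃, x₄, x₅} : Set V)) (hab : a ≠ b)
    (hre : ReachA G {v | v ∈ R.support} a b) :
    ∃ B, IsBridgeComp G {v | v ∈ R.support} B ∧
      2 ≤ (({x₃, x₄, x₅} : Set V) ∩ B).ncard := by
  have haS : a ∉ {v | v ∈ R.support} := by
    rcases ha with rfl | rfl | rfl
    exacts [h3, h4, h5]
  refine ⟨CompA G {v | v ∈ R.support} a, compA_isBridge _ _ haS,
    two_le_ncard_of_pair hab ⟨ha, reachA_refl haS⟩ ⟨hb, hre⟩⟩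

end St3Lemmas


theorem statement_3 {V : Type} [Fintype V] (G : SimpleGraph V)
    (h5 : KConn G 5)
    (x₁ x₂ x₃ x₄ x₅ : V)
    (hdist : [x₁, x₂, x₃, x₄, x₅].Pairwise (· ≠ ·))
    (e₁₃ : G.Adj x₁ x₃) (e₁₄ : G.Adj x₁ x₄) (e₁₅ : G.Adj x₁ x₅)
    (e₂₃ : G.Adj x₂ x₃) (e₂₄ : G.Adj x₂ x₄) (e₂₅ : G.Adj x₂ x₅)
    (hnadj : ¬ G.Adj x₁ x₂) :
    ∃ P : G.Walk x₁ x₂, IsInducedPathW G P ∧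
      x₃ ∉ P.support ∧ x₄ ∉ P.support ∧ x₅ ∉ P.support ∧
      ∃ B, IsBridgeComp G {v | v ∈ P.support} B ∧
        2 ≤ (({x₃, x₄, x₅} : Set V) ∩ B).ncard := by
  classical
  simp only [List.pairwise_cons, List.mem_cons, List.mem_singleton, List.not_mem_nil,
    List.Pairwise.nil, and_true, List.mem_singleton] at hdist
  obtain ⟨hd1, hd2, hd3, hd4, -⟩ := hdist
  have d12 : x₁ ≠ x₂ := hd1 x₂ (by tauto)
  have d13 : x₁ ≠ x₃ := hd1 x₃ (by tauto)
  have d14 : x₁ ≠ x₄ := hd1 x₄ (by tauto)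
  have d15 : x₁ ≠ x₅ := hd1 x₅ (by tauto)
  have d23 : x₂ ≠ x₃ := hd2 x₃ (by tauto)
  have d24 : x₂ ≠ x₄ := hd2 x₄ (by tauto)
  have d25 : x₂ ≠ x₅ := hd2 x₅ (by tauto)
  have d34 : x₃ ≠ x₄ := hd3 x₄ (by tauto)
  have d35 : x₃ ≠ x₅ := hd3 x₅ (by tauto)
  have d45 : x₄ ≠ x₅ := hd4 x₅ (by tauto)
  set X : Set V := {x₃, x₄, x₅} with hX
  have hx1X : x₁ ∉ X := by simp [hX, d13, d14, d15]
  have hx2X : x₂ ∉ X := by simp [hX, d23, d24, d25]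
  have hXcard : X.ncard ≤ 3 := by
    refine le_trans (Set.ncard_insert_le _ _) ?_
    have := Set.ncard_insert_le x₄ ({x₅} : Set V)
    simp only [Set.ncard_singleton] at this
    omega
  have hR : ∀ S : Set V, S.ncard ≤ 4 → ∀ u v : V, u ∉ S → v ∉ S → ReachA G S u v :=
    fun S hs u v hu hv => reach_of_kconn h5 hs hu hv
  obtain ⟨w0, hw0⟩ := hR X (by omega) x₁ x₂ hx1X hx2X
  obtain ⟨p₀, q₀, hp₀, hq₀, hp₀X, hq₀X, hdisj₀⟩ :=
    whitney hR hXcard w0.length x₁ x₂ hx1X hx2X d12 ⟨w0, hw0, le_refl _⟩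
  -- make both induced
  obtain ⟨P, hPp, hPs, hPind, -⟩ :=
    exists_induced_path (G := G) (S := {v | v ∉ p₀.support}) ⟨p₀, fun x hx => by simpa using hx⟩
  obtain ⟨Q, hQp, hQs, hQind, -⟩ :=
    exists_induced_path (G := G) (S := {v | v ∉ q₀.support}) ⟨q₀, fun x hx => by simpa using hx⟩
  have hPsub : ∀ x ∈ P.support, x ∈ p₀.support := fun x hx => not_not.mp (hPs x hx)
  have hQsub : ∀ x ∈ Q.support, x ∈ q₀.support := fun x hx => not_not.mp (hQs x hx)
  have hPX : ∀ x ∈ P.support, x ∉ X := fun x hx => hp₀X x (hPsub x hx)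
  have hQX : ∀ x ∈ Q.support, x ∉ X := fun x hx => hq₀X x (hQsub x hx)
  have hdisj : ∀ x, x ∈ P.support → x ∈ Q.support → x = x₁ ∨ x = x₂ :=
    fun x hx hx' => hdisj₀ x (hPsub x hx) (hQsub x hx')
  have hPind' : IsInducedPathW G P := ⟨hPp, hPind⟩
  have hQind' : IsInducedPathW G Q := ⟨hQp, hQind⟩
  have h3P : x₃ ∉ P.support := fun h => hPX x₃ h (by simp [hX])
  have h4P : x₄ ∉ P.support := fun h => hPX x₄ h (by simp [hX])
  have h5P : x₅ ∉ P.support := fun h => hPX x₅ h (by simp [hX])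
  have h3Q : x₃ ∉ Q.support := fun h => hQX x₃ h (by simp [hX])
  have h4Q : x₄ ∉ Q.support := fun h => hQX x₄ h (by simp [hX])
  have h5Q : x₅ ∉ Q.support := fun h => hQX x₅ h (by simp [hX])
  set SP : Set V := {v | v ∈ P.support} with hSP
  by_cases h34 : ReachA G SP x₃ x₄
  · exact ⟨P, hPind', h3P, h4P, h5P,
      result_of_pair P h3P h4P h5P (by simp) (by simp) d34 h34⟩
  by_cases h35 : ReachA G SP x₃ x₅
  · exact ⟨P, hPind', h3P, h4P, h5P,
      result_of_pair P h3P h4P h5P (by simp) (by simp) d35 h35⟩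
  by_cases h45 : ReachA G SP x₄ x₅
  · exact ⟨P, hPind', h3P, h4P, h5P,
      result_of_pair P h3P h4P h5P (by simp) (by simp) d45 h45⟩
  -- hard case
  obtain ⟨y, hay, Q', hQeq⟩ := Walk.exists_eq_cons_of_ne d12 Q
  have hQ'p : Q'.IsPath ∧ x₁ ∉ Q'.support := by
    have := hQp
    rw [hQeq, Walk.cons_isPath_iff] at this
    exact this
  -- interior of Q reaches y avoiding P
  have hyreach : ∀ v, v ∈ Q.support → v ≠ x₁ → v ≠ x₂ → ReachA G SP y v := by
    intro v hv hv1 hv2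
    have hvQ' : v ∈ Q'.support := by
      rw [hQeq, Walk.support_cons] at hv
      rcases List.mem_cons.mp hv with h | h
      · exact absurd h hv1
      · exact h
    obtain ⟨w, hw⟩ := mid_reach hQ'p.1 hvQ' hv2
    refine ⟨w, fun x hx => ?_⟩
    obtain ⟨hxQ', hx2⟩ := hw x hx
    have hx1 : x ≠ x₁ := fun h => hQ'p.2 (h ▸ hxQ')
    have hxQ : x ∈ Q.support := by
      rw [hQeq, Walk.support_cons]
      exact List.mem_cons_of_mem _ hxQ'
    intro hxP
    rcases hdisj x hxP hxQ with h | h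
    exacts [hx1 h, hx2 h]
  -- interior of P connects interior vertices avoiding Q
  have hPint : ∀ s t, s ∈ P.support → s ≠ x₁ → s ≠ x₂ → t ∈ P.support → t ≠ x₁ → t ≠ x₂ →
      ReachA G {v | v ∈ Q.support} s t := by
    obtain ⟨y', hay', P', hPeq⟩ := Walk.exists_eq_cons_of_ne d12 P
    have hP'p : P'.IsPath ∧ x₁ ∉ P'.support := by
      have := hPp
      rw [hPeq, Walk.cons_isPath_iff] at this
      exact this
    intro s t hs hs1 hs2 ht ht1 ht2
    have hsP' : s ∈ P'.support := by
      rw [hPeq, Walk.support_cons] at hs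
      rcases List.mem_cons.mp hs with h | h
      · exact absurd h hs1
      · exact h
    have htP' : t ∈ P'.support := by
      rw [hPeq, Walk.support_cons] at ht
      rcases List.mem_cons.mp ht with h | h
      · exact absurd h ht1
      · exact h
    obtain ⟨ws, hws⟩ := mid_reach hP'p.1 hsP' hs2
    obtain ⟨wt, hwt⟩ := mid_reach hP'p.1 htP' ht2
    refine ⟨ws.reverse.append wt, fun x hx => ?_⟩
    have hxok : x ∈ P'.support ∧ x ≠ x₂ := by
      rw [Walk.mem_support_append_iff] at hx
      rcases hx with hx | hx
      · rw [Walk.support_reverse, List.mem_reverse] at hx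
        exact hws x hx
      · exact hwt x hx
    have hx1 : x ≠ x₁ := fun h => hP'p.2 (h ▸ hxok.1)
    have hxP : x ∈ P.support := by
      rw [hPeq, Walk.support_cons]
      exact List.mem_cons_of_mem _ hxok.1
    intro hxQ
    rcases hdisj x hxP hxQ with h | h
    exacts [hx1 h, hxok.2 h]
  -- at most one of x₃, x₄, x₅ can reach y
  have key : ∀ a b : V, a ∈ X → b ∈ X → a ≠ b → a ∉ P.support → b ∉ P.support →
      a ≠ x₁ → a ≠ x₂ → b ≠ x₁ → b ≠ x₂ → ¬ ReachA G SP a b →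
      ¬ ReachA G SP a y → ¬ ReachA G SP b y →
      ∃ P : G.Walk x₁ x₂, IsInducedPathW G P ∧
        x₃ ∉ P.support ∧ x₄ ∉ P.support ∧ x₅ ∉ P.support ∧
        ∃ B, IsBridgeComp G {v | v ∈ P.support} B ∧
          2 ≤ (({x₃, x₄, x₅} : Set V) ∩ B).ncard := by
    intro a b haX hbX hab haP hbP ha1 ha2 hb1 hb2 hnab hna hnb
    have hcross : ReachA G {v | v ∈ Q.support} a b :=
      cross_reach hR hyreach hPint hdisj haP hbP ha1 ha2 hb1 hb2 hnab hna hnb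
    exact ⟨Q, hQind', h3Q, h4Q, h5Q,
      result_of_pair Q h3Q h4Q h5Q haX hbX hab hcross⟩
  by_cases hr3 : ReachA G SP x₃ y
  · have hr4 : ¬ ReachA G SP x₄ y := fun h => h34 (reachA_trans hr3 (reachA_symm h))
    have hr5 : ¬ ReachA G SP x₅ y := fun h => h35 (reachA_trans hr3 (reachA_symm h))
    exact key x₄ x₅ (by simp [hX]) (by simp [hX]) d45 h4P h5P
      (Ne.symm d14) (Ne.symm d24) (Ne.symm d15) (Ne.symm d25) h45 hr4 hr5
  · by_cases hr4 : ReachA G SP x₄ y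
    · have hr5 : ¬ ReachA G SP x₅ y := fun h => h45 (reachA_trans hr4 (reachA_symm h))
      exact key x₃ x₅ (by simp [hX]) (by simp [hX]) d35 h3P h5P
        (Ne.symm d13) (Ne.symm d23) (Ne.symm d15) (Ne.symm d25) h35 hr3 hr5
    · exact key x₃ x₄ (by simp [hX]) (by simp [hX]) d34 h3P h4P
        (Ne.symm d13) (Ne.symm d23) (Ne.symm d14) (Ne.symm d24) h34 hr3 hr4
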